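/- For 1 ≤ p < q < ∞, every p-summing weighted holomorphic mapping is q-summing weighted holomorphic with π_q^{Hv}(f) ≤ π_p^{Hv}(f). -/

import Mathlib

open scoped BigOperators
open MeasureTheory

noncomputable section

/-- The closed unit ball of the weighted holomorphic space `Hv(U)`. -/
def HvBall {E : Type*} [NormedAddCommGroup E] [NormedSpace ℂ E]
    (v : E → ℝ) (U : Set E) : Set (E → ℂ) :=
  {g | DifferentiableOn ℂ g U ∧ ∀ x ∈ U, v x * ‖g x‖ ≤ 1}

/-- `sup_{g ∈ B_{Hv(U)}} (∑ |λᵢ|^p v(xᵢ)^p |g(xᵢ)|^p)^(1/p)`. -/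
def hvSup {E : Type*} [NormedAddCommGroup E] [NormedSpace ℂ E]
    (p : ℝ) (v : E → ℝ) (U : Set E) {n : ℕ} (lam : Fin n → ℂ) (x : Fin n → E) : ℝ :=
  ⨆ g : HvBall v U, (∑ i, ‖lam i‖ ^ p * v (x i) ^ p * ‖(g : E → ℂ) (x i)‖ ^ p) ^ (1 / p)

/-- `f` satisfies the `p`-summing weighted holomorphic inequality with constant `C`. -/
def PSummingWith {E F : Type*} [NormedAddCommGroup E] [NormedSpace ℂ E]
    [NormedAddCommGroup F] [NormedSpace ℂ F]
    (p : ℝ) (v : E → ℝ) (U : Set E) (f : E → F) (C : ℝ) : Prop :=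
  ∀ (n : ℕ) (lam : Fin n → ℂ) (x : Fin n → E), (∀ i, x i ∈ U) →
    (∑ i, ‖lam i‖ ^ p * v (x i) ^ p * ‖f (x i)‖ ^ p) ^ (1 / p) ≤ C * hvSup p v U lam x

/-- The `p`-summing weighted holomorphic norm `π_p^{Hv}(f)`. -/
def pihv {E F : Type*} [NormedAddCommGroup E] [NormedSpace ℂ E]
    [NormedAddCommGroup F] [NormedSpace ℂ F]
    (p : ℝ) (v : E → ℝ) (U : Set E) (f : E → F) : ℝ :=
  sInf {C | 0 ≤ C ∧ PSummingWith p v U f C}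

section auxlemmas

variable {E : Type*} [NormedAddCommGroup E] [NormedSpace ℂ E]

lemma zero_mem_HvBall (v : E → ℝ) (U : Set E) : (0 : E → ℂ) ∈ HvBall v U := by
  constructor
  · exact differentiableOn_const 0
  · intro x hx; simp

lemma hv_bdd (p : ℝ) (hp : 0 < p) (v : E → ℝ) (U : Set E) {n : ℕ}
    (lam : Fin n → ℂ) (x : Fin n → E) (hx : ∀ i, x i ∈ U) (hv : ∀ y ∈ U, 0 ≤ v y) :
    BddAbove (Set.range fun g : HvBall v U =>
      (∑ i, ‖lam i‖ ^ p * v (x i) ^ p * ‖(g : E → ℂ) (x i)‖ ^ p) ^ (1 / p)) := by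
  refine ⟨(∑ i, ‖lam i‖ ^ p) ^ (1 / p), ?_⟩
  rintro _ ⟨⟨g, hg⟩, rfl⟩
  have hterm : ∀ i, (0:ℝ) ≤ ‖lam i‖ ^ p * v (x i) ^ p * ‖g (x i)‖ ^ p := fun i =>
    mul_nonneg (mul_nonneg (Real.rpow_nonneg (norm_nonneg _) _)
      (Real.rpow_nonneg (hv _ (hx i)) _)) (Real.rpow_nonneg (norm_nonneg _) _)
  apply Real.rpow_le_rpow (Finset.sum_nonneg fun i _ => hterm i) _ (by positivity)
  apply Finset.sum_le_sum
  intro i _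
  have h1 : v (x i) ^ p * ‖g (x i)‖ ^ p = (v (x i) * ‖g (x i)‖) ^ p :=
    (Real.mul_rpow (hv _ (hx i)) (norm_nonneg _)).symm
  rw [mul_assoc, h1]
  have h2 : (v (x i) * ‖g (x i)‖) ^ p ≤ 1 :=
    Real.rpow_le_one (mul_nonneg (hv _ (hx i)) (norm_nonneg _)) (hg.2 _ (hx i)) hp.le
  calc ‖lam i‖ ^ p * (v (x i) * ‖g (x i)‖) ^ p ≤ ‖lam i‖ ^ p * 1 := by
        exact mul_le_mul_of_nonneg_left h2 (by positivity)
    _ = ‖lam i‖ ^ p := mul_one _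

lemma le_hvSup (p : ℝ) (hp : 0 < p) (v : E → ℝ) (U : Set E) {n : ℕ}
    (lam : Fin n → ℂ) (x : Fin n → E) (hx : ∀ i, x i ∈ U) (hv : ∀ y ∈ U, 0 ≤ v y)
    {g : E → ℂ} (hg : g ∈ HvBall v U) :
    (∑ i, ‖lam i‖ ^ p * v (x i) ^ p * ‖g (x i)‖ ^ p) ^ (1 / p) ≤ hvSup p v U lam x :=
  le_ciSup (hv_bdd p hp v U lam x hx hv) (⟨g, hg⟩ : HvBall v U)

lemma hvSup_nonneg (p : ℝ) (hp : 0 < p) (v : E → ℝ) (U : Set E) {n : ℕ}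
    (lam : Fin n → ℂ) (x : Fin n → E) (hx : ∀ i, x i ∈ U) (hv : ∀ y ∈ U, 0 ≤ v y) :
    0 ≤ hvSup p v U lam x := by
  have h := le_hvSup p hp v U lam x hx hv (zero_mem_HvBall v U)
  refine le_trans ?_ h
  have : ∀ i : Fin n, ‖lam i‖ ^ p * v (x i) ^ p * ‖(0 : E → ℂ) (x i)‖ ^ p = 0 := by
    intro i
    simp [Real.zero_rpow hp.ne']
  rw [Finset.sum_congr rfl (fun i _ => this i), Finset.sum_const, smul_zero,
    Real.zero_rpow (by positivity : (1:ℝ)/p ≠ 0)]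

lemma psumming_mono {E F : Type*} [NormedAddCommGroup E] [NormedSpace ℂ E]
    [NormedAddCommGroup F] [NormedSpace ℂ F]
    (U : Set E) (v : E → ℝ) (hv : ∀ y ∈ U, 0 ≤ v y) (p q : ℝ) (hp : 1 ≤ p) (hpq : p < q)
    (f : E → F) {C : ℝ} (hC0 : 0 ≤ C) (hC : PSummingWith p v U f C) :
    PSummingWith q v U f C := by
  have hp0 : 0 < p := lt_of_lt_of_le one_pos hp
  have hq0 : 0 < q := lt_trans hp0 hpq
  have hqp0 : 0 < q - p := sub_pos.mpr hpq
  intro n lam x hx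
  haveI : Nonempty (HvBall v U) := ⟨⟨0, zero_mem_HvBall v U⟩⟩
  set a : Fin n → ℝ := fun i => ‖lam i‖ * v (x i) * ‖f (x i)‖ with ha_def
  have ha : ∀ i, 0 ≤ a i := fun i =>
    mul_nonneg (mul_nonneg (norm_nonneg _) (hv _ (hx i))) (norm_nonneg _)
  have hterm : ∀ i, ‖lam i‖ ^ q * v (x i) ^ q * ‖f (x i)‖ ^ q = a i ^ q := by
    intro i
    rw [ha_def]
    rw [Real.mul_rpow (mul_nonneg (norm_nonneg _) (hv _ (hx i))) (norm_nonneg _),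
      Real.mul_rpow (norm_nonneg _) (hv _ (hx i))]
  set S : ℝ := ∑ i, a i ^ q with hS_def
  have hS0 : 0 ≤ S := Finset.sum_nonneg fun i _ => Real.rpow_nonneg (ha i) _
  rw [Finset.sum_congr rfl (fun i _ => hterm i)]
  rcases eq_or_lt_of_le hS0 with hS | hS
  · rw [← hS_def, ← hS, Real.zero_rpow (by positivity : (1:ℝ)/q ≠ 0)]
    exact mul_nonneg hC0 (hvSup_nonneg q hq0 v U lam x hx hv)
  · -- main case S > 0
    set lam' : Fin n → ℂ := fun i => lam i * ((a i ^ (q / p - 1) : ℝ) : ℂ) with hlam'_def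
    have hnorm' : ∀ i, ‖lam' i‖ = ‖lam i‖ * a i ^ (q / p - 1) := by
      intro i
      rw [hlam'_def]
      simp only [norm_mul, Complex.norm_real, Real.norm_eq_abs,
        abs_of_nonneg (Real.rpow_nonneg (ha i) _)]
    have hexp : (q / p - 1) * p = q - p := by field_simp
    have hpow' : ∀ i, ‖lam' i‖ ^ p = ‖lam i‖ ^ p * a i ^ (q - p) := by
      intro i
      rw [hnorm' i, Real.mul_rpow (norm_nonneg _) (Real.rpow_nonneg (ha i) _),
        ← Real.rpow_mul (ha i), hexp]
    have htermp : ∀ i, ‖lam i‖ ^ p * v (x i) ^ p * ‖f (x i)‖ ^ p = a i ^ p := by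
      intro i
      rw [ha_def]
      rw [Real.mul_rpow (mul_nonneg (norm_nonneg _) (hv _ (hx i))) (norm_nonneg _),
        Real.mul_rpow (norm_nonneg _) (hv _ (hx i))]
    have key : ∀ i, ‖lam' i‖ ^ p * v (x i) ^ p * ‖f (x i)‖ ^ p = a i ^ q := by
      intro i
      calc ‖lam' i‖ ^ p * v (x i) ^ p * ‖f (x i)‖ ^ p
          = (‖lam i‖ ^ p * v (x i) ^ p * ‖f (x i)‖ ^ p) * a i ^ (q - p) := by
            rw [hpow' i]; ring
        _ = a i ^ p * a i ^ (q - p) := by rw [htermp i]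
        _ = a i ^ (p + (q - p)) := (Real.rpow_add' (ha i) (by
            intro h; exact hq0.ne' (by linarith))).symm
        _ = a i ^ q := by congr 1; ring
    have hmain := hC n lam' x hx
    rw [Finset.sum_congr rfl (fun i _ => key i)] at hmain
    -- hmain : S ^ (1/p) ≤ C * hvSup p v U lam' x
    have hconj : Real.HolderConjugate (q / p) (q / (q - p)) := by
      rw [Real.holderConjugate_iff]
      constructor
      · rw [lt_div_iff₀ hp0]; linarith
      · rw [← one_div, ← one_div, one_div_div, one_div_div]
        field_simp
        ring
    have hsup : hvSup p v U lam' x ≤ hvSup q v U lam x * S ^ ((q - p) / (p * q)) := by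
      apply ciSup_le
      rintro ⟨g, hg⟩
      set t : Fin n → ℝ := fun i => ‖lam i‖ * v (x i) * ‖g (x i)‖ with ht_def
      have ht : ∀ i, 0 ≤ t i := fun i =>
        mul_nonneg (mul_nonneg (norm_nonneg _) (hv _ (hx i))) (norm_nonneg _)
      have htfac : ∀ (r : ℝ) i, ‖lam i‖ ^ r * v (x i) ^ r * ‖g (x i)‖ ^ r = t i ^ r := by
        intro r i
        rw [ht_def]
        rw [Real.mul_rpow (mul_nonneg (norm_nonneg _) (hv _ (hx i))) (norm_nonneg _),
          Real.mul_rpow (norm_nonneg _) (hv _ (hx i))]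
      have key2 : ∀ i, ‖lam' i‖ ^ p * v (x i) ^ p * ‖(g : E → ℂ) (x i)‖ ^ p
          = t i ^ p * a i ^ (q - p) := by
        intro i
        calc ‖lam' i‖ ^ p * v (x i) ^ p * ‖g (x i)‖ ^ p
            = (‖lam i‖ ^ p * v (x i) ^ p * ‖g (x i)‖ ^ p) * a i ^ (q - p) := by
              rw [hpow' i]; ring
          _ = t i ^ p * a i ^ (q - p) := by rw [htfac p i]
      have hH := Real.inner_le_Lp_mul_Lq (Finset.univ : Finset (Fin n))
        (fun i => t i ^ p) (fun i => a i ^ (q - p)) hconj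
      have e1 : ∀ i : Fin n, |t i ^ p| ^ (q / p) = t i ^ q := by
        intro i
        rw [abs_of_nonneg (Real.rpow_nonneg (ht i) _), ← Real.rpow_mul (ht i)]
        congr 1; field_simp
      have e2 : ∀ i : Fin n, |a i ^ (q - p)| ^ (q / (q - p)) = a i ^ q := by
        intro i
        rw [abs_of_nonneg (Real.rpow_nonneg (ha i) _), ← Real.rpow_mul (ha i)]
        congr 1; field_simp
      rw [Finset.sum_congr rfl (fun i _ => e1 i), Finset.sum_congr rfl (fun i _ => e2 i),
        one_div_div, one_div_div] at hH
      -- hH : ∑ t^p * a^(q-p) ≤ (∑ t^q) ^ (p/q) * S ^ ((q-p)/q)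
      have hT0 : 0 ≤ ∑ i, t i ^ q := Finset.sum_nonneg fun i _ => Real.rpow_nonneg (ht i) _
      have step1 : (∑ i, ‖lam' i‖ ^ p * v (x i) ^ p * ‖(g : E → ℂ) (x i)‖ ^ p) ^ (1 / p)
          ≤ ((∑ i, t i ^ q) ^ (p / q) * S ^ ((q - p) / q)) ^ (1 / p) := by
        apply Real.rpow_le_rpow _ _ (by positivity)
        · rw [Finset.sum_congr rfl (fun i _ => key2 i)]
          exact Finset.sum_nonneg fun i _ =>
            mul_nonneg (Real.rpow_nonneg (ht i) _) (Real.rpow_nonneg (ha i) _)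
        · rw [Finset.sum_congr rfl (fun i _ => key2 i)]
          exact hH
      have step2 : ((∑ i, t i ^ q) ^ (p / q) * S ^ ((q - p) / q)) ^ (1 / p)
          = (∑ i, t i ^ q) ^ (1 / q) * S ^ ((q - p) / (p * q)) := by
        rw [Real.mul_rpow (Real.rpow_nonneg hT0 _) (Real.rpow_nonneg hS0 _),
          ← Real.rpow_mul hT0, ← Real.rpow_mul hS0]
        congr 1
        · congr 1; field_simp
        · congr 1; rw [div_mul_div_comm, mul_one, mul_comm q p]
      have step3 : (∑ i, t i ^ q) ^ (1 / q) ≤ hvSup q v U lam x := by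
        have := le_hvSup q hq0 v U lam x hx hv hg
        rwa [Finset.sum_congr rfl (fun i _ => htfac q i)] at this
      calc (∑ i, ‖lam' i‖ ^ p * v (x i) ^ p * ‖(g : E → ℂ) (x i)‖ ^ p) ^ (1 / p)
          ≤ (∑ i, t i ^ q) ^ (1 / q) * S ^ ((q - p) / (p * q)) := by rw [← step2]; exact step1
        _ ≤ hvSup q v U lam x * S ^ ((q - p) / (p * q)) :=
            mul_le_mul_of_nonneg_right step3 (Real.rpow_nonneg hS0 _)
    have hfinal : S ^ (1 / p) ≤ (C * hvSup q v U lam x) * S ^ ((q - p) / (p * q)) := by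
      calc S ^ (1 / p) ≤ C * hvSup p v U lam' x := hmain
        _ ≤ C * (hvSup q v U lam x * S ^ ((q - p) / (p * q))) :=
            mul_le_mul_of_nonneg_left hsup hC0
        _ = (C * hvSup q v U lam x) * S ^ ((q - p) / (p * q)) := by ring
    have hsplit : S ^ (1 / p) = S ^ (1 / q) * S ^ ((q - p) / (p * q)) := by
      rw [← Real.rpow_add hS]
      congr 1
      field_simp
      ring
    rw [hsplit] at hfinal
    exact le_of_mul_le_mul_right hfinal (Real.rpow_pos_of_pos hS _)

end auxlemmas

/-- Inclusion: for `1 ≤ p < q < ∞`, every `p`-summing weighted holomorphic map is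
`q`-summing weighted holomorphic, with `π_q^{Hv}(f) ≤ π_p^{Hv}(f)`. -/
theorem stmt10 {E F : Type*} [NormedAddCommGroup E] [NormedSpace ℂ E] [CompleteSpace E]
    [NormedAddCommGroup F] [NormedSpace ℂ F] [CompleteSpace F]
    (U : Set E) (hU : IsOpen U) (v : E → ℝ) (hv : ∀ x ∈ U, 0 < v x)
    (hvc : ContinuousOn v U) (p q : ℝ) (hp : 1 ≤ p) (hpq : p < q)
    (f : E → F) (hf : DifferentiableOn ℂ f U)
    (hfp : ∃ C, 0 ≤ C ∧ PSummingWith p v U f C) :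
    (∃ C, 0 ≤ C ∧ PSummingWith q v U f C) ∧ pihv q v U f ≤ pihv p v U f := by
  have hv' : ∀ y ∈ U, 0 ≤ v y := fun y hy => (hv y hy).le
  obtain ⟨C, hC0, hCp⟩ := hfp
  constructor
  · exact ⟨C, hC0, psumming_mono U v hv' p q hp hpq f hC0 hCp⟩
  · apply csInf_le_csInf
    · exact ⟨0, fun c hc => hc.1⟩
    · exact ⟨C, hC0, hCp⟩
    · rintro c ⟨hc0, hc⟩
      exact ⟨hc0, psumming_mono U v hv' p q hp hpq f hc0 hc⟩
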